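/- Let α ≥ 0, c > 0, and ψ_{n,c}^{(α)} the L²(I,ω_α)-normalized eigenfunction of L_c^{(α)} with eigenvalue χ_n^α(c). Then the derivative of χ_n^α(c) with respect to c satisfies ∂_c χ_n^α(c) = 2c ∫_{-1}^{1} x² ψ_{n,c}^{(α)}(x)² (1-x²)^α dx. In particular 0 ≤ ∂_c χ_n^α(c) ≤ 2c, so χ_n^α is nondecreasing in c. -/

import Mathlib

open Real MeasureTheory intervalIntegral Filter Topology


lemma w_cont {α : ℝ} (hα : 0 ≤ α) : Continuous (fun x : ℝ => (1 - x ^ 2) ^ α) :=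
  (Real.continuous_rpow_const hα).comp (by continuity)

lemma w_nonneg {α : ℝ} {x : ℝ} (hx : x ∈ Set.Icc (-1:ℝ) 1) : 0 ≤ (1 - x ^ 2) ^ α := by
  apply Real.rpow_nonneg; nlinarith [hx.1, hx.2]

lemma cd2_deriv {f : ℝ → ℝ} (hf : ContDiff ℝ 2 f) :
    Differentiable ℝ f ∧ Differentiable ℝ (deriv f) ∧ Continuous (deriv (deriv f)) := by
  have h2 : ContDiff ℝ ((1:ℕ) + 1) f := by exact_mod_cast hf
  have h := (contDiff_succ_iff_deriv.mp h2)
  have h1 : ContDiff ℝ ((0:ℕ)+1) (deriv f) := by exact_mod_cast h.2.2.of_le (by norm_num)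
  have h' := contDiff_succ_iff_deriv.mp h1
  exact ⟨h.1, h'.1, h'.2.2.continuous⟩

lemma op_integral_eq (α : ℝ) (hα : 0 ≤ α) (f g : ℝ → ℝ) (hf : ContDiff ℝ 2 f) (hg : ContDiff ℝ 2 g) :
    (∫ x in (-1:ℝ)..1,
        (-(1 - x ^ 2) * deriv (deriv f) x + 2 * (α + 1) * x * deriv f x) * g x * (1 - x ^ 2) ^ α)
      = ∫ x in (-1:ℝ)..1, (1 - x ^ 2) ^ (α + 1) * deriv f x * deriv g x := by
  obtain ⟨hfd, hfd1, hfc2⟩ := cd2_deriv hf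
  obtain ⟨hgd, hgd1, hgc2⟩ := cd2_deriv hg
  have hfd1c : Continuous (deriv f) := hfd1.continuous
  have hgd1c : Continuous (deriv g) := hgd1.continuous
  have hcw : Continuous (fun x : ℝ => (1 - x ^ 2) ^ α) := w_cont hα
  have hcP : Continuous (fun x : ℝ => (1 - x ^ 2) ^ (α + 1)) := w_cont (by linarith)
  set u : ℝ → ℝ := fun x => -((1 - x ^ 2) ^ (α + 1) * deriv f x) with hu_def
  set u' : ℝ → ℝ := fun x =>
    2 * (α + 1) * x * (1 - x ^ 2) ^ α * deriv f x - (1 - x ^ 2) ^ α * (1 - x ^ 2) * deriv (deriv f) x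
    with hu'_def
  have huIcc : Set.uIcc (-1:ℝ) 1 = Set.Icc (-1:ℝ) 1 := Set.uIcc_of_le (by norm_num)
  have hbase : ∀ x ∈ Set.uIcc (-1:ℝ) 1, (0:ℝ) ≤ 1 - x ^ 2 := by
    intro x hx; rw [huIcc] at hx; nlinarith [hx.1, hx.2]
  have hP : ∀ x ∈ Set.uIcc (-1:ℝ) 1, (1 - x ^ 2) ^ (α + 1) = (1 - x ^ 2) ^ α * (1 - x ^ 2) := by
    intro x hx
    rw [Real.rpow_add' (hbase x hx) (by linarith), Real.rpow_one]
  have hu : ∀ x ∈ Set.uIcc (-1:ℝ) 1, HasDerivAt u (u' x) x := by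
    intro x hx
    have hq : HasDerivAt (fun x : ℝ => 1 - x ^ 2) (-(2 * x)) x := by
      simpa using ((hasDerivAt_pow 2 x).const_sub 1)
    have hPd : HasDerivAt (fun x : ℝ => (1 - x ^ 2) ^ (α + 1))
        (-(2 * x) * (α + 1) * (1 - x ^ 2) ^ (α + 1 - 1)) x :=
      hq.rpow_const (Or.inr (by linarith))
    have := (hPd.mul (hfd1 x).hasDerivAt).neg
    refine this.congr_deriv ?_
    rw [hu'_def, hP x hx, add_sub_cancel_right]
    ring
  have hv : ∀ x ∈ Set.uIcc (-1:ℝ) 1, HasDerivAt g (deriv g x) x := fun x _ => (hgd x).hasDerivAt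
  have hu'int : IntervalIntegrable u' volume (-1) 1 := by
    apply Continuous.intervalIntegrable; fun_prop
  have hv'int : IntervalIntegrable (deriv g) volume (-1) 1 := hgd1c.intervalIntegrable _ _
  have parts := integral_mul_deriv_eq_deriv_mul hu hv hu'int hv'int
  have hb1 : u 1 = 0 := by
    simp [hu_def, Real.zero_rpow (by linarith : α + 1 ≠ 0)]
  have hb2 : u (-1) = 0 := by
    simp [hu_def]
    exact Or.inl (Real.zero_rpow (by linarith : α + 1 ≠ 0))
  rw [hb1, hb2] at parts
  have step1 : (∫ x in (-1:ℝ)..1,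
        (-(1 - x ^ 2) * deriv (deriv f) x + 2 * (α + 1) * x * deriv f x) * g x * (1 - x ^ 2) ^ α)
      = ∫ x in (-1:ℝ)..1, u' x * g x := by
    apply integral_congr
    intro x hx
    rw [hu'_def]; ring
  have step2 : (∫ x in (-1:ℝ)..1, u x * deriv g x)
      = - ∫ x in (-1:ℝ)..1, (1 - x ^ 2) ^ (α + 1) * deriv f x * deriv g x := by
    rw [← intervalIntegral.integral_neg]
    apply integral_congr
    intro x hx
    rw [hu_def]; ring
  rw [step1]
  rw [step2] at parts
  linarith [parts]

lemma eig_integral (α : ℝ) (hα : 0 ≤ α) (t χt : ℝ) (f g : ℝ → ℝ)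
    (hf : ContDiff ℝ 2 f) (hg : ContDiff ℝ 2 g)
    (heig : ∀ x ∈ Set.Ioo (-1:ℝ) 1,
      -(1 - x ^ 2) * deriv (deriv f) x + 2 * (α + 1) * x * deriv f x + t ^ 2 * x ^ 2 * f x
        = χt * f x) :
    (∫ x in (-1:ℝ)..1, (1 - x ^ 2) ^ (α + 1) * deriv f x * deriv g x)
      = χt * (∫ x in (-1:ℝ)..1, f x * g x * (1 - x ^ 2) ^ α)
        - t ^ 2 * (∫ x in (-1:ℝ)..1, x ^ 2 * (f x * g x) * (1 - x ^ 2) ^ α) := by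
  have hcw : Continuous (fun x : ℝ => (1 - x ^ 2) ^ α) := w_cont hα
  have hfc : Continuous f := hf.continuous
  have hgc : Continuous g := hg.continuous
  rw [← op_integral_eq α hα f g hf hg]
  have hae : ∀ᵐ x : ℝ, x ∈ Set.uIoc (-1:ℝ) 1 →
      (-(1 - x ^ 2) * deriv (deriv f) x + 2 * (α + 1) * x * deriv f x) * g x * (1 - x ^ 2) ^ α
        = χt * (f x * g x * (1 - x ^ 2) ^ α)
          - t ^ 2 * (x ^ 2 * (f x * g x) * (1 - x ^ 2) ^ α) := by
    have h1 : ∀ᵐ x : ℝ, x ≠ (1:ℝ) := by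
      refine MeasureTheory.ae_iff.mpr ?_
      simpa using measure_singleton (1:ℝ)
    filter_upwards [h1] with x hx1 hx
    rw [Set.uIoc_of_le (by norm_num : (-1:ℝ) ≤ 1)] at hx
    have hxIoo : x ∈ Set.Ioo (-1:ℝ) 1 := ⟨hx.1, lt_of_le_of_ne hx.2 hx1⟩
    have he := heig x hxIoo
    have : -(1 - x ^ 2) * deriv (deriv f) x + 2 * (α + 1) * x * deriv f x
        = χt * f x - t ^ 2 * x ^ 2 * f x := by linarith
    rw [show (-(1 - x ^ 2) * deriv (deriv f) x + 2 * (α + 1) * x * deriv f x) * g x * (1 - x ^ 2) ^ α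
      = (-(1 - x ^ 2) * deriv (deriv f) x + 2 * (α + 1) * x * deriv f x) * (g x * (1 - x ^ 2) ^ α) by ring, this]
    ring
  rw [integral_congr_ae hae]
  rw [integral_sub ((by fun_prop : Continuous fun x : ℝ => χt * (f x * g x * (1 - x ^ 2) ^ α)).intervalIntegrable _ _)
      ((by fun_prop : Continuous fun x : ℝ => t ^ 2 * (x ^ 2 * (f x * g x) * (1 - x ^ 2) ^ α)).intervalIntegrable _ _),
    intervalIntegral.integral_const_mul, intervalIntegral.integral_const_mul]


lemma expand_add (w f g : ℝ → ℝ) (hw : Continuous w) (hf : Continuous f) (hg : Continuous g)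
    (hf1 : (∫ x in (-1:ℝ)..1, f x ^ 2 * w x) = 1) (hg1 : (∫ x in (-1:ℝ)..1, g x ^ 2 * w x) = 1) :
    (∫ x in (-1:ℝ)..1, (f x + g x) ^ 2 * w x)
      = 2 + 2 * ∫ x in (-1:ℝ)..1, f x * g x * w x := by
  have i1 : IntervalIntegrable (fun x => f x ^ 2 * w x) volume (-1) 1 :=
    (by fun_prop : Continuous fun x => f x ^ 2 * w x).intervalIntegrable _ _
  have i2 : IntervalIntegrable (fun x => (2:ℝ) * (f x * g x * w x)) volume (-1) 1 :=
    (by fun_prop : Continuous fun x => (2:ℝ) * (f x * g x * w x)).intervalIntegrable _ _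
  have i3 : IntervalIntegrable (fun x => g x ^ 2 * w x) volume (-1) 1 :=
    (by fun_prop : Continuous fun x => g x ^ 2 * w x).intervalIntegrable _ _
  calc (∫ x in (-1:ℝ)..1, (f x + g x) ^ 2 * w x)
      = ∫ x in (-1:ℝ)..1, (f x ^ 2 * w x + ((2:ℝ) * (f x * g x * w x) + g x ^ 2 * w x)) := by
        apply integral_congr; intro x _; ring
    _ = (∫ x in (-1:ℝ)..1, f x ^ 2 * w x)
        + ((∫ x in (-1:ℝ)..1, (2:ℝ) * (f x * g x * w x)) + ∫ x in (-1:ℝ)..1, g x ^ 2 * w x) := by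
        rw [integral_add i1 (i2.add i3), integral_add i2 i3]
    _ = 2 + 2 * ∫ x in (-1:ℝ)..1, f x * g x * w x := by
        rw [hf1, hg1, intervalIntegral.integral_const_mul]; ring

lemma expand_sub (w f g : ℝ → ℝ) (hw : Continuous w) (hf : Continuous f) (hg : Continuous g)
    (hf1 : (∫ x in (-1:ℝ)..1, f x ^ 2 * w x) = 1) (hg1 : (∫ x in (-1:ℝ)..1, g x ^ 2 * w x) = 1) :
    (∫ x in (-1:ℝ)..1, (f x - g x) ^ 2 * w x)
      = 2 - 2 * ∫ x in (-1:ℝ)..1, f x * g x * w x := by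
  have h := expand_add w f (fun x => -g x) hw hf hg.neg
    hf1 (by simpa using hg1)
  simp only [mul_neg, neg_mul] at h
  rw [intervalIntegral.integral_neg] at h
  calc (∫ x in (-1:ℝ)..1, (f x - g x) ^ 2 * w x)
      = ∫ x in (-1:ℝ)..1, (f x + -g x) ^ 2 * w x := by apply integral_congr; intro x _; ring
    _ = 2 - 2 * ∫ x in (-1:ℝ)..1, f x * g x * w x := by rw [h]; ring

section
variable (c : ℝ) (w : ℝ → ℝ) (ψ : ℝ → ℝ → ℝ)

lemma G_tendsto (hw : Continuous w) (hw0 : ∀ x ∈ Set.Icc (-1:ℝ) 1, 0 ≤ w x)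
    (hψdiff : ∀ x : ℝ, ContinuousAt (fun t => ψ t x) c)
    (hcont : ∀ t, Continuous (ψ t))
    (hnorm : ∀ t : ℝ, (∫ x in (-1:ℝ)..1, (ψ t x) ^ 2 * w x) = 1) :
    Tendsto (fun t => ∫ x in (-1:ℝ)..1, ψ t x * ψ c x * w x) (𝓝 c) (𝓝 1) := by
  set G : ℝ → ℝ := fun t => ∫ x in (-1:ℝ)..1, ψ t x * ψ c x * w x with hG_def
  have hexp : ∀ t, (∫ x in (-1:ℝ)..1, (ψ t x + ψ c x) ^ 2 * w x) = 2 + 2 * G t :=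
    fun t => expand_add w (ψ t) (ψ c) hw (hcont t) (hcont c) (hnorm t) (hnorm c)
  have hexps : ∀ t, (∫ x in (-1:ℝ)..1, (ψ t x - ψ c x) ^ 2 * w x) = 2 - 2 * G t :=
    fun t => expand_sub w (ψ t) (ψ c) hw (hcont t) (hcont c) (hnorm t) (hnorm c)
  have hGle : ∀ t, G t ≤ 1 := by
    intro t
    have h0 : 0 ≤ ∫ x in (-1:ℝ)..1, (ψ t x - ψ c x) ^ 2 * w x :=
      integral_nonneg (by norm_num) (fun x hx => mul_nonneg (sq_nonneg _) (hw0 x hx))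
    rw [hexps t] at h0; linarith
  have hGge : ∀ t, 0 ≤ 2 + 2 * G t := by
    intro t
    have h0 : 0 ≤ ∫ x in (-1:ℝ)..1, (ψ t x + ψ c x) ^ 2 * w x :=
      integral_nonneg (by norm_num) (fun x hx => mul_nonneg (sq_nonneg _) (hw0 x hx))
    rw [hexp t] at h0; linarith
  rw [tendsto_iff_seq_tendsto]
  intro u hu
  set μ : Measure ℝ := volume.restrict (Set.Ioc (-1:ℝ) 1) with hμ_def
  have hIoc : ∀ (F : ℝ → ℝ), (∫ x in (-1:ℝ)..1, F x) = ∫ x, F x ∂μ := by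
    intro F; rw [integral_of_le (by norm_num)]
  set Fn : ℕ → ℝ → ℝ := fun n x => (ψ (u n) x + ψ c x) ^ 2 * w x with hFn_def
  have hFn_cont : ∀ n, Continuous (Fn n) := fun n => by fun_prop
  have hFn_nn : ∀ n, 0 ≤ᵐ[μ] Fn n := by
    intro n
    rw [hμ_def]
    filter_upwards [ae_restrict_mem measurableSet_Ioc] with x hx
    exact mul_nonneg (sq_nonneg _) (hw0 x (Set.Ioc_subset_Icc_self hx))
  have hFn_int : ∀ n, Integrable (Fn n) μ :=
    fun n => ((hFn_cont n).intervalIntegrable (-1:ℝ) 1).1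
  have hFlim_cont : Continuous (fun x => (ψ c x + ψ c x) ^ 2 * w x) := by fun_prop
  have hFlim_nn : 0 ≤ᵐ[μ] (fun x => (ψ c x + ψ c x) ^ 2 * w x) := by
    rw [hμ_def]
    filter_upwards [ae_restrict_mem measurableSet_Ioc] with x hx
    exact mul_nonneg (sq_nonneg _) (hw0 x (Set.Ioc_subset_Icc_self hx))
  have hFlim_int : Integrable (fun x => (ψ c x + ψ c x) ^ 2 * w x) μ :=
    (hFlim_cont.intervalIntegrable (-1:ℝ) 1).1
  have hpt : ∀ x : ℝ, Tendsto (fun n => Fn n x) atTop (𝓝 ((ψ c x + ψ c x) ^ 2 * w x)) := by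
    intro x
    have hcx : Tendsto (fun n => ψ (u n) x) atTop (𝓝 (ψ c x)) := ((hψdiff x).tendsto).comp hu
    exact ((hcx.add tendsto_const_nhds).pow 2).mul_const (w x)
  have fatou := lintegral_liminf_le (μ := μ) (u := atTop)
    (f := fun n x => ENNReal.ofReal (Fn n x))
    (fun n => ((hFn_cont n).measurable).ennreal_ofReal)
  have hliminf_pt : (fun x => Filter.liminf (fun n => ENNReal.ofReal (Fn n x)) atTop)
      = fun x => ENNReal.ofReal ((ψ c x + ψ c x) ^ 2 * w x) := by
    funext x
    exact (ENNReal.tendsto_ofReal (hpt x)).liminf_eq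
  rw [hliminf_pt] at fatou
  have hL : (∫⁻ x, ENNReal.ofReal ((ψ c x + ψ c x) ^ 2 * w x) ∂μ) = ENNReal.ofReal 4 := by
    rw [← ofReal_integral_eq_lintegral_ofReal hFlim_int hFlim_nn]
    congr 1
    rw [← hIoc]
    have h4 := hexp c
    have hGc : G c = 1 := by
      rw [hG_def]
      simp only
      rw [show (∫ x in (-1:ℝ)..1, ψ c x * ψ c x * w x)
          = ∫ x in (-1:ℝ)..1, ψ c x ^ 2 * w x from integral_congr (fun x _ => by ring), hnorm c]
    rw [h4, hGc]; norm_num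
  have hR : ∀ n, (∫⁻ x, ENNReal.ofReal (Fn n x) ∂μ) = ENNReal.ofReal (2 + 2 * G (u n)) := by
    intro n
    rw [← ofReal_integral_eq_lintegral_ofReal (hFn_int n) (hFn_nn n), ← hIoc]
    rw [hexp (u n)]
  rw [hL] at fatou
  simp only [hR] at fatou
  have hub : ∀ᶠ n in atTop, ENNReal.ofReal (2 + 2 * G (u n)) ≤ ENNReal.ofReal 4 := by
    apply Eventually.of_forall
    intro n
    exact ENNReal.ofReal_le_ofReal (by linarith [hGle (u n)])
  have hsup := Filter.limsup_le_of_le (by isBoundedDefault) hub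
  have htd : Tendsto (fun n => ENNReal.ofReal (2 + 2 * G (u n))) atTop (𝓝 (ENNReal.ofReal 4)) :=
    tendsto_of_le_liminf_of_limsup_le fatou hsup
  have hreal : Tendsto (fun n => 2 + 2 * G (u n)) atTop (𝓝 4) := by
    have := (ENNReal.tendsto_toReal_iff (fun n => ENNReal.ofReal_ne_top)
      (ENNReal.ofReal_ne_top)).mpr htd
    simp only [ENNReal.toReal_ofReal (hGge _)] at this
    rw [ENNReal.toReal_ofReal (by norm_num : (0:ℝ) ≤ 4)] at this
    exact this
  have : Tendsto (fun n => ((2 + 2 * G (u n)) - 2) / 2) atTop (𝓝 ((4 - 2) / 2)) :=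
    (hreal.sub_const 2).div_const 2
  norm_num at this
  exact this


lemma H_tendsto (hw : Continuous w) (hw0 : ∀ x ∈ Set.Icc (-1:ℝ) 1, 0 ≤ w x)
    (hcont : ∀ t, Continuous (ψ t))
    (hnorm : ∀ t : ℝ, (∫ x in (-1:ℝ)..1, (ψ t x) ^ 2 * w x) = 1)
    (hG : Tendsto (fun t => ∫ x in (-1:ℝ)..1, ψ t x * ψ c x * w x) (𝓝 c) (𝓝 1)) :
    Tendsto (fun t => ∫ x in (-1:ℝ)..1, x ^ 2 * (ψ t x * ψ c x) * w x) (𝓝 c)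
      (𝓝 (∫ x in (-1:ℝ)..1, x ^ 2 * (ψ c x * ψ c x) * w x)) := by
  have hexps : ∀ t, (∫ x in (-1:ℝ)..1, (ψ t x - ψ c x) ^ 2 * w x)
      = 2 - 2 * ∫ x in (-1:ℝ)..1, ψ t x * ψ c x * w x :=
    fun t => expand_sub w (ψ t) (ψ c) hw (hcont t) (hcont c) (hnorm t) (hnorm c)
  have hI4 : (∫ x in (-1:ℝ)..1, x ^ 4 * ψ c x ^ 2 * w x) ≤ 1 := by
    calc (∫ x in (-1:ℝ)..1, x ^ 4 * ψ c x ^ 2 * w x)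
        ≤ ∫ x in (-1:ℝ)..1, ψ c x ^ 2 * w x := by
          apply integral_mono_on (by norm_num)
            ((by fun_prop : Continuous fun x : ℝ => x ^ 4 * ψ c x ^ 2 * w x).intervalIntegrable _ _)
            ((by fun_prop : Continuous fun x : ℝ => ψ c x ^ 2 * w x).intervalIntegrable _ _)
          intro x hx
          have hx2 : x ^ 2 ≤ 1 := by nlinarith [hx.1, hx.2]
          have hx4 : x ^ 4 ≤ 1 := by nlinarith [sq_nonneg x, hx2]
          nlinarith [mul_nonneg (sq_nonneg (ψ c x)) (hw0 x hx)]
      _ = 1 := hnorm c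
  rw [Metric.tendsto_nhds]
  intro ε hε
  have hev : ∀ᶠ t in 𝓝 c, dist (∫ x in (-1:ℝ)..1, ψ t x * ψ c x * w x) 1 < ε ^ 2 / 2 :=
    (Metric.tendsto_nhds.mp hG) (ε ^ 2 / 2) (by positivity)
  filter_upwards [hev] with t hdist
  have hA : (∫ x in (-1:ℝ)..1, (ψ t x - ψ c x) ^ 2 * w x) < ε ^ 2 := by
    rw [hexps t, Real.dist_eq] at *
    have := abs_lt.mp hdist
    linarith [this.1, this.2]
  have i1 : IntervalIntegrable (fun x : ℝ => x ^ 2 * (ψ t x * ψ c x) * w x) volume (-1) 1 :=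
    (by fun_prop : Continuous fun x : ℝ => x ^ 2 * (ψ t x * ψ c x) * w x).intervalIntegrable _ _
  have i2 : IntervalIntegrable (fun x : ℝ => x ^ 2 * (ψ c x * ψ c x) * w x) volume (-1) 1 :=
    (by fun_prop : Continuous fun x : ℝ => x ^ 2 * (ψ c x * ψ c x) * w x).intervalIntegrable _ _
  have hsub : (∫ x in (-1:ℝ)..1, x ^ 2 * (ψ t x * ψ c x) * w x)
      - (∫ x in (-1:ℝ)..1, x ^ 2 * (ψ c x * ψ c x) * w x)
      = ∫ x in (-1:ℝ)..1,
        (x ^ 2 * (ψ t x * ψ c x) * w x - x ^ 2 * (ψ c x * ψ c x) * w x) :=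
    (integral_sub i1 i2).symm
  rw [Real.dist_eq, hsub]
  have habs : |∫ x in (-1:ℝ)..1,
        (x ^ 2 * (ψ t x * ψ c x) * w x - x ^ 2 * (ψ c x * ψ c x) * w x)|
      ≤ ∫ x in (-1:ℝ)..1,
        |x ^ 2 * (ψ t x * ψ c x) * w x - x ^ 2 * (ψ c x * ψ c x) * w x| :=
    abs_integral_le_integral_abs (by norm_num)
  have hmono : (∫ x in (-1:ℝ)..1,
        |x ^ 2 * (ψ t x * ψ c x) * w x - x ^ 2 * (ψ c x * ψ c x) * w x|)
      ≤ ∫ x in (-1:ℝ)..1,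
        (1 / (2 * ε) * ((ψ t x - ψ c x) ^ 2 * w x) + ε / 2 * (x ^ 4 * ψ c x ^ 2 * w x)) := by
    apply integral_mono_on (by norm_num) ((i1.sub i2).abs)
      ((by fun_prop : Continuous fun x : ℝ =>
        1 / (2 * ε) * ((ψ t x - ψ c x) ^ 2 * w x) + ε / 2 * (x ^ 4 * ψ c x ^ 2 * w x)).intervalIntegrable _ _)
    intro x hx
    have hwx := hw0 x hx
    have key3 : x ^ 2 * |ψ t x - ψ c x| * |ψ c x|
        ≤ 1 / (2 * ε) * (ψ t x - ψ c x) ^ 2 + ε / 2 * (x ^ 4 * ψ c x ^ 2) := by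
      have h0 : 2 * ε * (|ψ t x - ψ c x| * (x ^ 2 * |ψ c x|))
          ≤ |ψ t x - ψ c x| ^ 2 + ε ^ 2 * (x ^ 2 * |ψ c x|) ^ 2 := by
        nlinarith [sq_nonneg (|ψ t x - ψ c x| - ε * (x ^ 2 * |ψ c x|))]
      have ha : |ψ t x - ψ c x| ^ 2 = (ψ t x - ψ c x) ^ 2 := sq_abs _
      have hb : (x ^ 2 * |ψ c x|) ^ 2 = x ^ 4 * ψ c x ^ 2 := by
        rw [mul_pow, sq_abs]; ring
      rw [ha, hb] at h0
      rw [show 1 / (2 * ε) * (ψ t x - ψ c x) ^ 2 + ε / 2 * (x ^ 4 * ψ c x ^ 2)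
          = ((ψ t x - ψ c x) ^ 2 + ε ^ 2 * (x ^ 4 * ψ c x ^ 2)) / (2 * ε) by field_simp]
      rw [le_div_iff₀ (by positivity)]
      nlinarith [h0]
    have heq : |x ^ 2 * (ψ t x * ψ c x) * w x - x ^ 2 * (ψ c x * ψ c x) * w x|
        = x ^ 2 * |ψ t x - ψ c x| * |ψ c x| * w x := by
      rw [show x ^ 2 * (ψ t x * ψ c x) * w x - x ^ 2 * (ψ c x * ψ c x) * w x
          = x ^ 2 * (ψ t x - ψ c x) * ψ c x * w x by ring]
      rw [abs_mul, abs_of_nonneg hwx, abs_mul, abs_mul, abs_pow, sq_abs]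
    rw [heq]
    calc x ^ 2 * |ψ t x - ψ c x| * |ψ c x| * w x
        ≤ (1 / (2 * ε) * (ψ t x - ψ c x) ^ 2 + ε / 2 * (x ^ 4 * ψ c x ^ 2)) * w x :=
          mul_le_mul_of_nonneg_right key3 hwx
      _ = 1 / (2 * ε) * ((ψ t x - ψ c x) ^ 2 * w x) + ε / 2 * (x ^ 4 * ψ c x ^ 2 * w x) := by
          ring
  have hBint : (∫ x in (-1:ℝ)..1,
        (1 / (2 * ε) * ((ψ t x - ψ c x) ^ 2 * w x) + ε / 2 * (x ^ 4 * ψ c x ^ 2 * w x)))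
      = (1 / (2 * ε)) * (∫ x in (-1:ℝ)..1, (ψ t x - ψ c x) ^ 2 * w x)
        + (ε / 2) * (∫ x in (-1:ℝ)..1, x ^ 4 * ψ c x ^ 2 * w x) := by
    rw [integral_add
      ((by fun_prop : Continuous fun x : ℝ =>
        1 / (2 * ε) * ((ψ t x - ψ c x) ^ 2 * w x)).intervalIntegrable _ _)
      ((by fun_prop : Continuous fun x : ℝ =>
        ε / 2 * (x ^ 4 * ψ c x ^ 2 * w x)).intervalIntegrable _ _),
      intervalIntegral.integral_const_mul, intervalIntegral.integral_const_mul]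
  have hfin1 : (1 / (2 * ε)) * (∫ x in (-1:ℝ)..1, (ψ t x - ψ c x) ^ 2 * w x) < ε / 2 := by
    have h1 : (0:ℝ) < 1 / (2 * ε) := by positivity
    calc (1 / (2 * ε)) * (∫ x in (-1:ℝ)..1, (ψ t x - ψ c x) ^ 2 * w x)
        < (1 / (2 * ε)) * ε ^ 2 := (mul_lt_mul_iff_right₀ h1).mpr hA
      _ = ε / 2 := by field_simp
  have hfin2 : (ε / 2) * (∫ x in (-1:ℝ)..1, x ^ 4 * ψ c x ^ 2 * w x) ≤ ε / 2 := by
    calc (ε / 2) * (∫ x in (-1:ℝ)..1, x ^ 4 * ψ c x ^ 2 * w x)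
        ≤ (ε / 2) * 1 := mul_le_mul_of_nonneg_left hI4 (by positivity)
      _ = ε / 2 := by ring
  calc |∫ x in (-1:ℝ)..1,
        (x ^ 2 * (ψ t x * ψ c x) * w x - x ^ 2 * (ψ c x * ψ c x) * w x)|
      ≤ ∫ x in (-1:ℝ)..1,
        (1 / (2 * ε) * ((ψ t x - ψ c x) ^ 2 * w x) + ε / 2 * (x ^ 4 * ψ c x ^ 2 * w x)) :=
        le_trans habs hmono
    _ < ε := by rw [hBint]; linarith

end


/-- Derivative of the prolate eigenvalue with respect to the bandwidth: if `ψ t` is the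
`L²(I,ω_α)`-normalized eigenfunction of `L_t^{(α)} f = -(1-x²)f'' + 2(α+1)x f' + t²x² f` with
eigenvalue `χ t`, depending smoothly on `t`, then at `t = c > 0`,
`∂_c χ = 2c ∫_{-1}^1 x² ψ_c(x)² (1-x²)^α dx`, and in particular `0 ≤ ∂_c χ ≤ 2c`, so `χ`
is nondecreasing in `c`. -/
theorem chi_deriv_formula (c α : ℝ) (hc : 0 < c) (hα : 0 ≤ α)
    (χ : ℝ → ℝ) (ψ : ℝ → ℝ → ℝ)
    (hχdiff : DifferentiableAt ℝ χ c)
    (hψdiff : ∀ x : ℝ, DifferentiableAt ℝ (fun t => ψ t x) c)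
    (hsmooth : ∀ t : ℝ, ContDiff ℝ 2 (ψ t))
    (heig : ∀ t : ℝ, ∀ x ∈ Set.Ioo (-1 : ℝ) 1,
      -(1 - x ^ 2) * deriv (deriv (ψ t)) x + 2 * (α + 1) * x * deriv (ψ t) x +
        t ^ 2 * x ^ 2 * ψ t x = χ t * ψ t x)
    (hnorm : ∀ t : ℝ, (∫ x in (-1 : ℝ)..1, (ψ t x) ^ 2 * (1 - x ^ 2) ^ α) = 1) :
    deriv χ c = 2 * c * (∫ x in (-1 : ℝ)..1, x ^ 2 * (ψ c x) ^ 2 * (1 - x ^ 2) ^ α) ∧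
    0 ≤ deriv χ c ∧ deriv χ c ≤ 2 * c := by
  have hw : Continuous (fun x : ℝ => (1 - x ^ 2) ^ α) := w_cont hα
  have hw0 : ∀ x ∈ Set.Icc (-1:ℝ) 1, 0 ≤ (1 - x ^ 2) ^ α := fun x hx => w_nonneg hx
  have hcont : ∀ t : ℝ, Continuous (ψ t) := fun t => (hsmooth t).continuous
  have key : ∀ t : ℝ, (χ t - χ c) * (∫ x in (-1:ℝ)..1, ψ t x * ψ c x * (1 - x ^ 2) ^ α)
      = (t ^ 2 - c ^ 2) * (∫ x in (-1:ℝ)..1, x ^ 2 * (ψ t x * ψ c x) * (1 - x ^ 2) ^ α) := by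
    intro t
    have h1 := eig_integral α hα t (χ t) (ψ t) (ψ c) (hsmooth t) (hsmooth c) (heig t)
    have h2 := eig_integral α hα c (χ c) (ψ c) (ψ t) (hsmooth c) (hsmooth t) (heig c)
    have e1 : (∫ x in (-1:ℝ)..1, ψ c x * ψ t x * (1 - x ^ 2) ^ α)
        = ∫ x in (-1:ℝ)..1, ψ t x * ψ c x * (1 - x ^ 2) ^ α :=
      integral_congr (fun x _ => by ring)
    have e2 : (∫ x in (-1:ℝ)..1, x ^ 2 * (ψ c x * ψ t x) * (1 - x ^ 2) ^ α)
        = ∫ x in (-1:ℝ)..1, x ^ 2 * (ψ t x * ψ c x) * (1 - x ^ 2) ^ α :=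
      integral_congr (fun x _ => by ring)
    have e3 : (∫ x in (-1:ℝ)..1, (1 - x ^ 2) ^ (α + 1) * deriv (ψ c) x * deriv (ψ t) x)
        = ∫ x in (-1:ℝ)..1, (1 - x ^ 2) ^ (α + 1) * deriv (ψ t) x * deriv (ψ c) x :=
      integral_congr (fun x _ => by ring)
    rw [e3, e1, e2] at h2
    linear_combination h2 - h1
  have hG := G_tendsto c (fun x => (1 - x ^ 2) ^ α) ψ hw hw0
    (fun x => (hψdiff x).continuousAt) hcont hnorm
  have hH := H_tendsto c (fun x => (1 - x ^ 2) ^ α) ψ hw hw0 hcont hnorm hG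
  have hslope : Tendsto (fun t => (χ t - χ c) / (t - c)) (𝓝[≠] c) (𝓝 (deriv χ c)) := by
    have h := hasDerivAt_iff_tendsto_slope.mp hχdiff.hasDerivAt
    apply h.congr'
    filter_upwards with t
    rw [slope_def_field]
  have lhs : Tendsto (fun t => ((χ t - χ c) / (t - c))
        * (∫ x in (-1:ℝ)..1, ψ t x * ψ c x * (1 - x ^ 2) ^ α))
      (𝓝[≠] c) (𝓝 (deriv χ c * 1)) :=
    hslope.mul (hG.mono_left nhdsWithin_le_nhds)
  have rhs : Tendsto (fun t => (t + c)
        * (∫ x in (-1:ℝ)..1, x ^ 2 * (ψ t x * ψ c x) * (1 - x ^ 2) ^ α))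
      (𝓝[≠] c) (𝓝 ((c + c) * (∫ x in (-1:ℝ)..1, x ^ 2 * (ψ c x * ψ c x) * (1 - x ^ 2) ^ α))) :=
    (((continuous_id.add continuous_const).tendsto c).mono_left nhdsWithin_le_nhds).mul
      (hH.mono_left nhdsWithin_le_nhds)
  have heqev : (fun t => ((χ t - χ c) / (t - c))
        * (∫ x in (-1:ℝ)..1, ψ t x * ψ c x * (1 - x ^ 2) ^ α))
      =ᶠ[𝓝[≠] c] (fun t => (t + c)
        * (∫ x in (-1:ℝ)..1, x ^ 2 * (ψ t x * ψ c x) * (1 - x ^ 2) ^ α)) := by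
    filter_upwards [eventually_mem_nhdsWithin] with t ht
    have htne : t - c ≠ 0 := sub_ne_zero.mpr ht
    rw [div_mul_eq_mul_div, div_eq_iff htne]
    linear_combination key t
  have huniq : deriv χ c * 1
      = (c + c) * (∫ x in (-1:ℝ)..1, x ^ 2 * (ψ c x * ψ c x) * (1 - x ^ 2) ^ α) :=
    tendsto_nhds_unique (lhs.congr' heqev) rhs
  have hHrw : (∫ x in (-1:ℝ)..1, x ^ 2 * (ψ c x * ψ c x) * (1 - x ^ 2) ^ α)
      = ∫ x in (-1:ℝ)..1, x ^ 2 * (ψ c x) ^ 2 * (1 - x ^ 2) ^ α :=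
    integral_congr (fun x _ => by ring)
  have hderiv : deriv χ c = 2 * c * (∫ x in (-1:ℝ)..1, x ^ 2 * (ψ c x) ^ 2 * (1 - x ^ 2) ^ α) := by
    rw [← hHrw]; linarith [huniq]
  have hHc0 : 0 ≤ ∫ x in (-1:ℝ)..1, x ^ 2 * (ψ c x) ^ 2 * (1 - x ^ 2) ^ α :=
    integral_nonneg (by norm_num)
      (fun x hx => mul_nonneg (mul_nonneg (sq_nonneg _) (sq_nonneg _)) (hw0 x hx))
  have hHc1 : (∫ x in (-1:ℝ)..1, x ^ 2 * (ψ c x) ^ 2 * (1 - x ^ 2) ^ α) ≤ 1 := by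
    calc (∫ x in (-1:ℝ)..1, x ^ 2 * (ψ c x) ^ 2 * (1 - x ^ 2) ^ α)
        ≤ ∫ x in (-1:ℝ)..1, (ψ c x) ^ 2 * (1 - x ^ 2) ^ α := by
          apply integral_mono_on (by norm_num)
            ((by fun_prop : Continuous fun x : ℝ =>
              x ^ 2 * (ψ c x) ^ 2 * (1 - x ^ 2) ^ α).intervalIntegrable _ _)
            ((by fun_prop : Continuous fun x : ℝ =>
              (ψ c x) ^ 2 * (1 - x ^ 2) ^ α).intervalIntegrable _ _)
          intro x hx
          have hx2 : x ^ 2 ≤ 1 := by nlinarith [hx.1, hx.2]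
          nlinarith [mul_nonneg (sq_nonneg (ψ c x)) (hw0 x hx)]
      _ = 1 := hnorm c
  refine ⟨hderiv, ?_, ?_⟩
  · rw [hderiv]; positivity
  · rw [hderiv]
    calc 2 * c * (∫ x in (-1:ℝ)..1, x ^ 2 * (ψ c x) ^ 2 * (1 - x ^ 2) ^ α)
        ≤ 2 * c * 1 := mul_le_mul_of_nonneg_left hHc1 (by linarith)
      _ = 2 * c := by ring
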